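/- Let f' : [0,s'] → ℝ and f'' : [s', s'+s''] → ℝ be C^{1,1} functions with s', s'' > 0 and f'(s') = f''(s'), and let f := f' ∪ f'' be the function on [0, s'+s''] obtained by piecing them together. Define Q := f(s') − conv_{[0,s'+s'']} f (s'). Then Q ≥ 0, and the L¹-distance between the piecewise envelope derivatives and the global envelope derivative equals 2Q: ∫_0^{s'} [(conv_{[0,s']} f')'(τ) − (conv_{[0,s'+s'']} f)'(τ)] dτ + ∫_{s'}^{s'+s''} [(conv_{[0,s'+s'']} f)'(τ) − (conv_{[s',s'+s'']} f'')'(τ)] dτ = 2Q, and moreover both integrands are pointwise of the sign indicated (the first is nonnegative on [0,s'], the second nonnegative on [s',s'+s'']). -/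

import Mathlib

open Set

/-- The convex envelope of `g` on the interval `[a,b]`: the pointwise supremum of all
convex functions on `[a,b]` lying below `g` on `[a,b]`. -/
noncomputable def convEnv (a b : ℝ) (g : ℝ → ℝ) : ℝ → ℝ :=
  fun u => sSup {y : ℝ | ∃ h : ℝ → ℝ, ConvexOn ℝ (Set.Icc a b) h ∧
    (∀ x ∈ Set.Icc a b, h x ≤ g x) ∧ y = h u}

open Filter Topology

lemma aux_convexOn_affine {s : Set ℝ} (hs : Convex ℝ s) (c d : ℝ) :
    ConvexOn ℝ s (fun x => c * x + d) := by
  refine ⟨hs, fun x _ y _ p q hp hq hpq => le_of_eq ?_⟩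
  simp only [smul_eq_mul]
  have hq1 : q = 1 - p := by linarith
  subst hq1; ring

lemma env_bddAbove (a b : ℝ) (g : ℝ → ℝ) {x : ℝ} (hx : x ∈ Icc a b) :
    BddAbove {y : ℝ | ∃ h : ℝ → ℝ, ConvexOn ℝ (Set.Icc a b) h ∧
      (∀ z ∈ Set.Icc a b, h z ≤ g z) ∧ y = h x} := by
  refine ⟨g x, fun y hy => ?_⟩
  obtain ⟨h, _, hle, rfl⟩ := hy
  exact hle x hx

lemma minorant_le_env (a b : ℝ) (g : ℝ → ℝ) {h : ℝ → ℝ} (hc : ConvexOn ℝ (Set.Icc a b) h)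
    (hle : ∀ z ∈ Set.Icc a b, h z ≤ g z) {x : ℝ} (hx : x ∈ Icc a b) :
    h x ≤ convEnv a b g x :=
  le_csSup (env_bddAbove a b g hx) ⟨h, hc, hle, rfl⟩

section lip

variable {a b K : ℝ} {g : ℝ → ℝ}

/-- Lipschitz-type hypothesis -/
def LipHyp (a b K : ℝ) (g : ℝ → ℝ) : Prop :=
  0 ≤ K ∧ ∀ x ∈ Icc a b, ∀ y ∈ Icc a b, |g x - g y| ≤ K * |x - y|

lemma LipHyp.minorant (hl : LipHyp a b K g) (hab : a ≤ b) :
    ConvexOn ℝ (Set.Icc a b) (fun _ => g a - K * (b - a)) ∧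
      (∀ z ∈ Set.Icc a b, g a - K * (b - a) ≤ g z) := by
  constructor
  · exact convexOn_const _ (convex_Icc a b)
  · intro z hz
    have := hl.2 a (left_mem_Icc.mpr hab) z hz
    have h1 : |a - z| ≤ b - a := by
      rw [abs_sub_comm, abs_of_nonneg (by linarith [hz.1])]; linarith [hz.2]
    have h2 : g a - g z ≤ |g a - g z| := le_abs_self _
    nlinarith [hl.1]

lemma env_nonempty (hl : LipHyp a b K g) (hab : a ≤ b) {x : ℝ} (_ : x ∈ Icc a b) :
    Set.Nonempty {y : ℝ | ∃ h : ℝ → ℝ, ConvexOn ℝ (Set.Icc a b) h ∧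
      (∀ z ∈ Set.Icc a b, h z ≤ g z) ∧ y = h x} :=
  ⟨g a - K * (b - a), (fun _ => g a - K * (b - a)), (hl.minorant hab).1,
    (hl.minorant hab).2, rfl⟩

lemma env_le_self (hl : LipHyp a b K g) (hab : a ≤ b) {x : ℝ} (hx : x ∈ Icc a b) :
    convEnv a b g x ≤ g x := by
  refine csSup_le (env_nonempty hl hab hx) ?_
  rintro y ⟨h, _, hle, rfl⟩
  exact hle x hx

lemma env_convexOn (hl : LipHyp a b K g) (hab : a ≤ b) :
    ConvexOn ℝ (Icc a b) (convEnv a b g) := by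
  refine ⟨convex_Icc a b, fun x hx y hy p q hp hq hpq => ?_⟩
  have hmem : p • x + q • y ∈ Icc a b := (convex_Icc a b) hx hy hp hq hpq
  refine csSup_le (env_nonempty hl hab hmem) ?_
  rintro r ⟨h, hc, hle, rfl⟩
  calc h (p • x + q • y) ≤ p • h x + q • h y := hc.2 hx hy hp hq hpq
    _ ≤ p • convEnv a b g x + q • convEnv a b g y := by
        have h1 := minorant_le_env a b g hc hle hx
        have h2 := minorant_le_env a b g hc hle hy
        simp only [smul_eq_mul]
        nlinarith

lemma env_eq_left (hl : LipHyp a b K g) (hab : a ≤ b) : convEnv a b g a = g a := by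
  refine le_antisymm (env_le_self hl hab (left_mem_Icc.mpr hab)) ?_
  have hc : ConvexOn ℝ (Set.Icc a b) (fun x => (-K) * x + (g a + K * a)) :=
    aux_convexOn_affine (convex_Icc a b) _ _
  have hle : ∀ z ∈ Set.Icc a b, (-K) * z + (g a + K * a) ≤ g z := by
    intro z hz
    have := hl.2 a (left_mem_Icc.mpr hab) z hz
    have h1 : |a - z| = z - a := by rw [abs_sub_comm]; exact abs_of_nonneg (by linarith [hz.1])
    rw [h1] at this
    have h2 : g a - g z ≤ |g a - g z| := le_abs_self _
    linarith
  have := minorant_le_env a b g hc hle (left_mem_Icc.mpr hab)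
  calc g a = (-K) * a + (g a + K * a) := by ring
    _ ≤ convEnv a b g a := this

lemma env_eq_right (hl : LipHyp a b K g) (hab : a ≤ b) : convEnv a b g b = g b := by
  refine le_antisymm (env_le_self hl hab (right_mem_Icc.mpr hab)) ?_
  have hc : ConvexOn ℝ (Set.Icc a b) (fun x => K * x + (g b - K * b)) :=
    aux_convexOn_affine (convex_Icc a b) _ _
  have hle : ∀ z ∈ Set.Icc a b, K * z + (g b - K * b) ≤ g z := by
    intro z hz
    have := hl.2 b (right_mem_Icc.mpr hab) z hz
    have h1 : |b - z| = b - z := abs_of_nonneg (by linarith [hz.2])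
    rw [h1] at this
    have h2 : g b - g z ≤ |g b - g z| := le_abs_self _
    linarith
  have := minorant_le_env a b g hc hle (right_mem_Icc.mpr hab)
  calc g b = K * b + (g b - K * b) := by ring
    _ ≤ convEnv a b g b := this

end lip
section derivslope

variable {a b : ℝ} {G : ℝ → ℝ} {x d c y : ℝ}

lemma tendsto_slope_Ioo_right (hd : HasDerivWithinAt G d (Icc a b) x)
    (hx : a ≤ x) (hxy : x < y) (hyb : y ≤ b) :
    Tendsto (slope G x) (𝓝[Ioo x y] x) (𝓝 d) := by
  have hsub : Ioo x y ⊆ Icc a b \ {x} := fun t ht =>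
    ⟨⟨le_trans hx (le_of_lt ht.1), le_trans (le_of_lt ht.2) hyb⟩, ne_of_gt ht.1⟩
  exact (hasDerivWithinAt_iff_tendsto_slope.mp hd).mono_left (nhdsWithin_mono _ hsub)

lemma tendsto_slope_Ioo_left (hd : HasDerivWithinAt G d (Icc a b) x)
    (hy : a ≤ y) (hxy : y < x) (hyb : x ≤ b) :
    Tendsto (slope G x) (𝓝[Ioo y x] x) (𝓝 d) := by
  have hsub : Ioo y x ⊆ Icc a b \ {x} := fun t ht =>
    ⟨⟨le_trans hy (le_of_lt ht.1), le_trans (le_of_lt ht.2) hyb⟩, ne_of_lt ht.2⟩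
  exact (hasDerivWithinAt_iff_tendsto_slope.mp hd).mono_left (nhdsWithin_mono _ hsub)

lemma neBot_right (hxy : x < y) : (𝓝[Ioo x y] x).NeBot := by
  apply mem_closure_iff_nhdsWithin_neBot.mp
  rw [closure_Ioo (ne_of_lt hxy)]
  exact ⟨le_refl x, hxy.le⟩

lemma neBot_left (hxy : y < x) : (𝓝[Ioo y x] x).NeBot := by
  apply mem_closure_iff_nhdsWithin_neBot.mp
  rw [closure_Ioo (ne_of_lt hxy)]
  exact ⟨hxy.le, le_refl x⟩

lemma deriv_le_of_slope_le_right (hd : HasDerivWithinAt G d (Icc a b) x)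
    (hx : a ≤ x) (hxy : x < y) (hyb : y ≤ b)
    (hb : ∀ t ∈ Ioo x y, slope G x t ≤ c) : d ≤ c := by
  haveI := neBot_right hxy
  exact le_of_tendsto (tendsto_slope_Ioo_right hd hx hxy hyb)
    (eventually_nhdsWithin_of_forall hb)

lemma deriv_ge_of_slope_ge_right (hd : HasDerivWithinAt G d (Icc a b) x)
    (hx : a ≤ x) (hxy : x < y) (hyb : y ≤ b)
    (hb : ∀ t ∈ Ioo x y, c ≤ slope G x t) : c ≤ d := by
  haveI := neBot_right hxy
  exact ge_of_tendsto (tendsto_slope_Ioo_right hd hx hxy hyb)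
    (eventually_nhdsWithin_of_forall hb)

lemma deriv_le_of_slope_le_left (hd : HasDerivWithinAt G d (Icc a b) x)
    (hy : a ≤ y) (hxy : y < x) (hyb : x ≤ b)
    (hb : ∀ t ∈ Ioo y x, slope G x t ≤ c) : d ≤ c := by
  haveI := neBot_left hxy
  exact le_of_tendsto (tendsto_slope_Ioo_left hd hy hxy hyb)
    (eventually_nhdsWithin_of_forall hb)

lemma deriv_ge_of_slope_ge_left (hd : HasDerivWithinAt G d (Icc a b) x)
    (hy : a ≤ y) (hxy : y < x) (hyb : x ≤ b)
    (hb : ∀ t ∈ Ioo y x, c ≤ slope G x t) : c ≤ d := by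
  haveI := neBot_left hxy
  exact ge_of_tendsto (tendsto_slope_Ioo_left hd hy hxy hyb)
    (eventually_nhdsWithin_of_forall hb)

/-- Support line of a convex function. -/
lemma support_line (hG : ConvexOn ℝ (Icc a b) G)
    (hx : x ∈ Icc a b) (hd : HasDerivWithinAt G d (Icc a b) x)
    (hy : y ∈ Icc a b) : G x + d * (y - x) ≤ G y := by
  rcases lt_trichotomy x y with hlt | heq | hgt
  · have key : d ≤ (G y - G x) / (y - x) := by
      refine deriv_le_of_slope_le_right hd hx.1 hlt hy.2 ?_
      intro t ht
      rw [slope_def_field]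
      have htm : t ∈ Icc a b := ⟨le_trans hx.1 ht.1.le, le_trans ht.2.le hy.2⟩
      exact hG.secant_mono hx htm hy (ne_of_gt ht.1) (ne_of_gt (ht.1.trans ht.2)) ht.2.le
    have hpos : 0 < y - x := by linarith
    rw [le_div_iff₀ hpos] at key
    linarith
  · subst heq; simp
  · have key : (G y - G x) / (y - x) ≤ d := by
      refine deriv_ge_of_slope_ge_left hd hy.1 hgt hx.2 ?_
      intro t ht
      rw [slope_def_field]
      have htm : t ∈ Icc a b := ⟨le_trans hy.1 ht.1.le, le_trans ht.2.le hx.2⟩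
      exact hG.secant_mono hx hy htm (ne_of_lt hgt) (ne_of_lt ht.2) ht.1.le
    have hneg : y - x < 0 := by linarith
    rw [div_le_iff_of_neg hneg] at key
    linarith

/-- derivative of convex function is monotone -/
lemma deriv_monotoneOn {D : ℝ → ℝ} (hG : ConvexOn ℝ (Icc a b) G)
    (hD : ∀ x ∈ Icc a b, HasDerivWithinAt G (D x) (Icc a b) x) :
    MonotoneOn D (Icc a b) := by
  intro x hx y hy hxy
  rcases eq_or_lt_of_le hxy with rfl | hlt
  · exact le_refl _
  · have h1 := support_line hG hx (hD x hx) hy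
    have h2 := support_line hG hy (hD y hy) hx
    nlinarith

end derivslope

section contact

variable {a b K : ℝ} {g : ℝ → ℝ}

lemma convexOn_hinge_left (a b : ℝ) {ε : ℝ} (hε : 0 ≤ ε) (τ : ℝ) :
    ConvexOn ℝ (Icc a b) (fun x => ε * max (τ - x) 0) := by
  have hc1 : ConvexOn ℝ (Icc a b) (fun x => (-1) * x + τ) :=
    aux_convexOn_affine (convex_Icc a b) _ _
  have hc2 : ConvexOn ℝ (Icc a b) (fun x => (0:ℝ) * x + 0) :=
    aux_convexOn_affine (convex_Icc a b) _ _
  have hc3 := (hc1.sup hc2).smul hε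
  have heq : (fun x => ε * max (τ - x) 0)
      = fun x => ε • (((fun x => (-1) * x + τ) ⊔ (fun x => (0:ℝ) * x + 0)) x) := by
    funext x
    simp only [Pi.sup_apply, smul_eq_mul]
    have h1 : (-1) * x + τ = τ - x := by ring
    have h2 : (0:ℝ) * x + 0 = 0 := by ring
    rw [h1, h2]
  rw [heq]
  exact hc3

lemma convexOn_hinge_right (a b : ℝ) {ε : ℝ} (hε : 0 ≤ ε) (τ : ℝ) :
    ConvexOn ℝ (Icc a b) (fun x => ε * max (x - τ) 0) := by
  have hc1 : ConvexOn ℝ (Icc a b) (fun x => (1:ℝ) * x + (-τ)) :=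
    aux_convexOn_affine (convex_Icc a b) _ _
  have hc2 : ConvexOn ℝ (Icc a b) (fun x => (0:ℝ) * x + 0) :=
    aux_convexOn_affine (convex_Icc a b) _ _
  have hc3 := (hc1.sup hc2).smul hε
  have heq : (fun x => ε * max (x - τ) 0)
      = fun x => ε • (((fun x => (1:ℝ) * x + (-τ)) ⊔ (fun x => (0:ℝ) * x + 0)) x) := by
    funext x
    simp only [Pi.sup_apply, smul_eq_mul]
    have h1 : (1:ℝ) * x + (-τ) = x - τ := by ring
    have h2 : (0:ℝ) * x + 0 = 0 := by ring
    rw [h1, h2]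
  rw [heq]
  exact hc3

lemma exists_contact (hab : a < b) (hl : LipHyp a b K g)
    (hg : ContinuousOn g (Icc a b)) {τ d : ℝ} (hτ : τ ∈ Icc a b)
    (hd : HasDerivWithinAt (convEnv a b g) d (Icc a b) τ)
    (hlt : convEnv a b g τ < g τ) :
    (∃ p ∈ Icc a b, p < τ ∧ convEnv a b g p = g p ∧
        g p = convEnv a b g τ + d * (p - τ)) ∧
    (∃ q ∈ Icc a b, τ < q ∧ convEnv a b g q = g q ∧
        g q = convEnv a b g τ + d * (q - τ)) := by
  set u := convEnv a b g with hu
  set ℓ : ℝ → ℝ := fun x => d * x + (u τ - d * τ) with hℓ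
  have hℓτ : ℓ τ = u τ := by simp only [hℓ]; ring
  have hℓu : ∀ x ∈ Icc a b, ℓ x ≤ u x := by
    intro x hx
    have := support_line (env_convexOn hl hab.le) hτ hd hx
    simp only [hℓ]
    linarith
  have hτa : a < τ := by
    rcases eq_or_lt_of_le hτ.1 with heq | h
    · exfalso
      rw [← heq] at hlt
      have h0 : u a = g a := env_eq_left hl hab.le
      linarith
    · exact h
  have hτb : τ < b := by
    rcases eq_or_lt_of_le hτ.2 with heq | h
    · exfalso
      rw [heq] at hlt
      have h0 : u b = g b := env_eq_right hl hab.le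
      linarith
    · exact h
  constructor
  · -- left contact
    by_contra hno
    push_neg at hno
    have hstrict : ∀ p ∈ Icc a τ, ℓ p < g p := by
      intro p hp
      rcases eq_or_lt_of_le hp.2 with rfl | hplt
      · rw [hℓτ]; exact hlt
      · have hpab : p ∈ Icc a b := ⟨hp.1, le_trans hp.2 hτ.2⟩
        rcases eq_or_lt_of_le (le_trans (hℓu p hpab) (env_le_self hl hab.le hpab)) with heq | h
        · exfalso
          have hup : u p = g p := by
            have h1 := hℓu p hpab
            have h2 := env_le_self hl hab.le hpab
            linarith [heq]
          have hgp : g p = u τ + d * (p - τ) := by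
            rw [← heq]
            simp only [hℓ]
            ring
          exact (hno p hpab hplt hup) hgp
        · exact h
    -- min of g - ℓ on Icc a τ
    have hcomp : IsCompact (Icc a τ) := isCompact_Icc
    have hcont : ContinuousOn (fun x => g x - ℓ x) (Icc a τ) := by
      apply ContinuousOn.sub
      · exact hg.mono (Icc_subset_Icc le_rfl hτ.2)
      · exact (Continuous.continuousOn (by continuity))
    obtain ⟨z, hz, hzmin⟩ := hcomp.exists_isMinOn (Set.nonempty_Icc.mpr hτa.le) hcont
    set δ : ℝ := g z - ℓ z with hδ
    have hδpos : 0 < δ := sub_pos.mpr (hstrict z hz)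
    set ε : ℝ := δ / (τ - a) with hε
    have hεpos : 0 < ε := div_pos hδpos (by linarith)
    set h : ℝ → ℝ := fun x => ℓ x + ε * max (τ - x) 0 with hh
    have hhc : ConvexOn ℝ (Icc a b) h := by
      have h1 : ConvexOn ℝ (Icc a b) ℓ := aux_convexOn_affine (convex_Icc a b) _ _
      have h2 := convexOn_hinge_left a b hεpos.le τ
      have := h1.add h2
      exact this
    have hhle : ∀ x ∈ Icc a b, h x ≤ g x := by
      intro x hx
      rcases le_or_gt τ x with hcase | hcase
      · have : max (τ - x) 0 = 0 := max_eq_right (by linarith)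
        simp only [hh, this, mul_zero, add_zero]
        exact le_trans (hℓu x hx) (env_le_self hl hab.le hx)
      · have hxm : x ∈ Icc a τ := ⟨hx.1, hcase.le⟩
        have hmin : δ ≤ g x - ℓ x := hzmin hxm
        have : max (τ - x) 0 = τ - x := max_eq_left (by linarith)
        simp only [hh, this]
        have hb1 : ε * (τ - x) ≤ ε * (τ - a) := by
          apply mul_le_mul_of_nonneg_left _ hεpos.le
          linarith [hx.1]
        have hb2 : ε * (τ - a) = δ := by
          rw [hε, div_mul_cancel₀ _ (sub_ne_zero.mpr (ne_of_gt hτa))]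
        linarith
    have hhu : ∀ x ∈ Icc a b, h x ≤ u x := fun x hx => minorant_le_env a b g hhc hhle hx
    have hbound : ∀ t ∈ Ioo a τ, slope u τ t ≤ d - ε := by
      intro t ht
      rw [slope_def_field]
      have htab : t ∈ Icc a b := ⟨ht.1.le, le_trans ht.2.le hτ.2⟩
      have h1 : h t ≤ u t := hhu t htab
      have h2 : max (τ - t) 0 = τ - t := max_eq_left (by linarith [ht.2])
      have h3 : ℓ t + ε * (τ - t) ≤ u t := by
        simp only [hh] at h1
        rw [h2] at h1; exact h1
      have h4 : u t - u τ ≥ (d - ε) * (t - τ) := by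
        simp only [hℓ] at h3
        nlinarith
      have hneg : t - τ < 0 := by linarith [ht.2]
      rw [div_le_iff_of_neg hneg]
      nlinarith
    have : d ≤ d - ε := deriv_le_of_slope_le_left hd le_rfl hτa hτ.2 hbound
    linarith
  · -- right contact
    by_contra hno
    push_neg at hno
    have hstrict : ∀ q ∈ Icc τ b, ℓ q < g q := by
      intro q hq
      rcases eq_or_lt_of_le hq.1 with rfl | hqlt
      · rw [hℓτ]; exact hlt
      · have hqab : q ∈ Icc a b := ⟨le_trans hτ.1 hq.1, hq.2⟩
        rcases eq_or_lt_of_le (le_trans (hℓu q hqab) (env_le_self hl hab.le hqab)) with heq | h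
        · exfalso
          have huq : u q = g q := by
            have h1 := hℓu q hqab
            have h2 := env_le_self hl hab.le hqab
            linarith [heq]
          have hgq : g q = u τ + d * (q - τ) := by
            rw [← heq]
            simp only [hℓ]
            ring
          exact (hno q hqab hqlt huq) hgq
        · exact h
    have hcomp : IsCompact (Icc τ b) := isCompact_Icc
    have hcont : ContinuousOn (fun x => g x - ℓ x) (Icc τ b) := by
      apply ContinuousOn.sub
      · exact hg.mono (Icc_subset_Icc hτ.1 le_rfl)
      · exact (Continuous.continuousOn (by continuity))
    obtain ⟨z, hz, hzmin⟩ := hcomp.exists_isMinOn (Set.nonempty_Icc.mpr hτb.le) hcont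
    set δ : ℝ := g z - ℓ z with hδ
    have hδpos : 0 < δ := sub_pos.mpr (hstrict z hz)
    set ε : ℝ := δ / (b - τ) with hε
    have hεpos : 0 < ε := div_pos hδpos (by linarith)
    set h : ℝ → ℝ := fun x => ℓ x + ε * max (x - τ) 0 with hh
    have hhc : ConvexOn ℝ (Icc a b) h := by
      have h1 : ConvexOn ℝ (Icc a b) ℓ := aux_convexOn_affine (convex_Icc a b) _ _
      have h2 := convexOn_hinge_right a b hεpos.le τ
      have := h1.add h2
      exact this
    have hhle : ∀ x ∈ Icc a b, h x ≤ g x := by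
      intro x hx
      rcases le_or_gt x τ with hcase | hcase
      · have : max (x - τ) 0 = 0 := max_eq_right (by linarith)
        simp only [hh, this, mul_zero, add_zero]
        exact le_trans (hℓu x hx) (env_le_self hl hab.le hx)
      · have hxm : x ∈ Icc τ b := ⟨hcase.le, hx.2⟩
        have hmin : δ ≤ g x - ℓ x := hzmin hxm
        have : max (x - τ) 0 = x - τ := max_eq_left (by linarith)
        simp only [hh, this]
        have hb1 : ε * (x - τ) ≤ ε * (b - τ) := by
          apply mul_le_mul_of_nonneg_left _ hεpos.le
          linarith [hx.2]
        have hb2 : ε * (b - τ) = δ := by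
          rw [hε, div_mul_cancel₀ _ (sub_ne_zero.mpr (ne_of_gt hτb))]
        linarith
    have hhu : ∀ x ∈ Icc a b, h x ≤ u x := fun x hx => minorant_le_env a b g hhc hhle hx
    have hbound : ∀ t ∈ Ioo τ b, d + ε ≤ slope u τ t := by
      intro t ht
      rw [slope_def_field]
      have htab : t ∈ Icc a b := ⟨le_trans hτ.1 ht.1.le, ht.2.le⟩
      have h1 : h t ≤ u t := hhu t htab
      have h2 : max (t - τ) 0 = t - τ := max_eq_left (by linarith [ht.1])
      have h3 : ℓ t + ε * (t - τ) ≤ u t := by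
        simp only [hh] at h1
        rw [h2] at h1; exact h1
      have h4 : u t - u τ ≥ (d + ε) * (t - τ) := by
        simp only [hℓ] at h3
        nlinarith
      have hpos : 0 < t - τ := by linarith [ht.1]
      rw [le_div_iff₀ hpos]
      nlinarith
    have : d + ε ≤ d := deriv_ge_of_slope_ge_right hd hτ.1 hτb le_rfl hbound
    linarith

end contact

section mainhelpers

lemma slope_mid_ge {p q r c e d' : ℝ} (h1 : c < e) (h2 : e < d')
    (h : (q - p) / (e - c) ≤ (r - q) / (d' - e)) :
    (q - p) / (e - c) ≤ (r - p) / (d' - c) := by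
  rw [div_le_div_iff₀ (by linarith) (by linarith)] at h ⊢
  nlinarith

lemma slope_mid_le {p q r c e d' : ℝ} (h1 : c < e) (h2 : e < d')
    (h : (q - p) / (e - c) ≤ (r - q) / (d' - e)) :
    (r - p) / (d' - c) ≤ (r - q) / (d' - e) := by
  rw [div_le_div_iff₀ (by linarith) (by linarith)] at h ⊢
  nlinarith

lemma lipHyp_of_deriv {a b C : ℝ} (g g' : ℝ → ℝ)
    (hg : ∀ x ∈ Icc a b, HasDerivWithinAt g (g' x) (Icc a b) x)
    (hC : ∀ x ∈ Icc a b, |g' x| ≤ C) (hC0 : 0 ≤ C) : LipHyp a b C g := by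
  refine ⟨hC0, fun x hx y hy => ?_⟩
  have := (convex_Icc a b).norm_image_sub_le_of_norm_hasDerivWithin_le hg
    (fun z hz => by rw [Real.norm_eq_abs]; exact hC z hz) hy hx
  rw [Real.norm_eq_abs, Real.norm_eq_abs] at this
  calc |g x - g y| ≤ C * |x - y| := this

lemma LipHyp.continuousOn {a b K : ℝ} {g : ℝ → ℝ} (hl : LipHyp a b K g) :
    ContinuousOn g (Icc a b) := by
  have : LipschitzOnWith K.toNNReal g (Icc a b) := by
    rw [lipschitzOnWith_iff_dist_le_mul]
    intro x hx y hy
    rw [Real.dist_eq, Real.dist_eq, Real.coe_toNNReal K hl.1]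
    exact hl.2 x hx y hy
  exact this.continuousOn

end mainhelpers

set_option maxHeartbeats 2000000 in
theorem stmt12 (s' s'' : ℝ) (hs' : 0 < s') (hs'' : 0 < s'')
    (f₁ f₂ f₁' f₂' : ℝ → ℝ) (M : NNReal)
    (hf₁ : ∀ x ∈ Set.Icc 0 s', HasDerivWithinAt f₁ (f₁' x) (Set.Icc 0 s') x)
    (hf₂ : ∀ x ∈ Set.Icc s' (s' + s''),
      HasDerivWithinAt f₂ (f₂' x) (Set.Icc s' (s' + s'')) x)
    (hL₁ : LipschitzOnWith M f₁' (Set.Icc 0 s'))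
    (hL₂ : LipschitzOnWith M f₂' (Set.Icc s' (s' + s'')))
    (hjoin : f₁ s' = f₂ s')
    (f : ℝ → ℝ) (hf : ∀ τ, f τ = if τ ≤ s' then f₁ τ else f₂ τ)
    (Q : ℝ) (hQ : Q = f s' - convEnv 0 (s' + s'') f s')
    (m' m'' m : ℝ → ℝ)
    (hm' : ∀ τ ∈ Set.Icc 0 s',
      HasDerivWithinAt (convEnv 0 s' f₁) (m' τ) (Set.Icc 0 s') τ)
    (hm'' : ∀ τ ∈ Set.Icc s' (s' + s''),
      HasDerivWithinAt (convEnv s' (s' + s'') f₂) (m'' τ) (Set.Icc s' (s' + s'')) τ)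
    (hm : ∀ τ ∈ Set.Icc 0 (s' + s''),
      HasDerivWithinAt (convEnv 0 (s' + s'') f) (m τ) (Set.Icc 0 (s' + s'')) τ) :
    0 ≤ Q ∧
    (∀ τ ∈ Set.Icc 0 s', m τ ≤ m' τ) ∧
    (∀ τ ∈ Set.Icc s' (s' + s''), m'' τ ≤ m τ) ∧
    (∫ τ in (0:ℝ)..s', (m' τ - m τ)) + (∫ τ in s'..(s' + s''), (m τ - m'' τ)) = 2 * Q := by
  set S : ℝ := s' + s'' with hSdef
  have hS1 : s' < S := by rw [hSdef]; linarith
  have hS0 : (0:ℝ) < S := lt_trans hs' hS1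
  have hM0 : (0:ℝ) ≤ (M:ℝ) := M.coe_nonneg
  -- Lipschitz constants
  set K₁ : ℝ := |f₁' 0| + M * s' with hK₁def
  set K₂ : ℝ := |f₂' s'| + M * (S - s') with hK₂def
  set K : ℝ := max K₁ K₂ with hKdef
  have hK₁0 : 0 ≤ K₁ := by
    have := abs_nonneg (f₁' 0); nlinarith
  have hK₂0 : 0 ≤ K₂ := by
    have := abs_nonneg (f₂' s'); nlinarith
  have hK0 : 0 ≤ K := le_trans hK₁0 (le_max_left _ _)
  have hb₁ : ∀ x ∈ Icc (0:ℝ) s', |f₁' x| ≤ K₁ := by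
    intro x hx
    have hd := (lipschitzOnWith_iff_dist_le_mul.mp hL₁) x hx 0 (left_mem_Icc.mpr hs'.le)
    rw [Real.dist_eq, Real.dist_eq, sub_zero, abs_of_nonneg hx.1] at hd
    have t1 : |f₁' x| - |f₁' 0| ≤ |f₁' x - f₁' 0| := abs_sub_abs_le_abs_sub _ _
    have t2 : (M:ℝ) * x ≤ M * s' := mul_le_mul_of_nonneg_left hx.2 hM0
    rw [hK₁def]; linarith
  have hb₂ : ∀ x ∈ Icc s' S, |f₂' x| ≤ K₂ := by
    intro x hx
    have hd := (lipschitzOnWith_iff_dist_le_mul.mp hL₂) x hx s' (left_mem_Icc.mpr hS1.le)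
    rw [Real.dist_eq, Real.dist_eq, abs_of_nonneg (by linarith [hx.1] : (0:ℝ) ≤ x - s')] at hd
    have t1 : |f₂' x| - |f₂' s'| ≤ |f₂' x - f₂' s'| := abs_sub_abs_le_abs_sub _ _
    have t2 : (M:ℝ) * (x - s') ≤ M * (S - s') := mul_le_mul_of_nonneg_left (by linarith [hx.2]) hM0
    rw [hK₂def]; linarith
  have hl₁ : LipHyp 0 s' K₁ f₁ := lipHyp_of_deriv f₁ f₁' hf₁ hb₁ hK₁0
  have hl₂ : LipHyp s' S K₂ f₂ := lipHyp_of_deriv f₂ f₂' hf₂ hb₂ hK₂0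
  -- f values
  have hfeq1 : ∀ x : ℝ, x ≤ s' → f x = f₁ x := by
    intro x hx; rw [hf x, if_pos hx]
  have hfeq2 : ∀ x : ℝ, s' < x → f x = f₂ x := by
    intro x hx; rw [hf x, if_neg (not_le.mpr hx)]
  have hfs₁ : f s' = f₁ s' := hfeq1 s' le_rfl
  have hfs₂ : f s' = f₂ s' := by rw [hfs₁, hjoin]
  have hf0 : f 0 = f₁ 0 := hfeq1 0 hs'.le
  have hfS : f S = f₂ S := hfeq2 S hS1
  -- Lipschitz for f
  have key : ∀ x ∈ Icc (0:ℝ) S, ∀ y ∈ Icc (0:ℝ) S, x ≤ y → |f x - f y| ≤ K * (y - x) := by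
    intro x hx y hy hxy
    have hK1K : K₁ ≤ K := le_max_left _ _
    have hK2K : K₂ ≤ K := le_max_right _ _
    rcases le_or_gt y s' with hys | hys
    · have e1 : f x = f₁ x := hfeq1 x (le_trans hxy hys)
      have e2 : f y = f₁ y := hfeq1 y hys
      have t := hl₁.2 x ⟨hx.1, le_trans hxy hys⟩ y ⟨hy.1, hys⟩
      have habs : |x - y| = y - x := by rw [abs_sub_comm]; exact abs_of_nonneg (by linarith)
      rw [habs] at t
      rw [e1, e2]
      nlinarith [mul_le_mul_of_nonneg_right hK1K (show (0:ℝ) ≤ y - x by linarith)]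
    · rcases le_or_gt x s' with hxs | hxs
      · have e1 : f x = f₁ x := hfeq1 x hxs
        have e2 : f y = f₂ y := hfeq2 y hys
        have t1 := hl₁.2 x ⟨hx.1, hxs⟩ s' ⟨hs'.le, le_rfl⟩
        have t2 := hl₂.2 s' ⟨le_rfl, hS1.le⟩ y ⟨hys.le, hy.2⟩
        have habs1 : |x - s'| = s' - x := by
          rw [abs_sub_comm]; exact abs_of_nonneg (by linarith)
        have habs2 : |s' - y| = y - s' := by
          rw [abs_sub_comm]; exact abs_of_nonneg (by linarith)
        rw [habs1] at t1; rw [habs2] at t2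
        have tri : |f x - f y| ≤ |f₁ x - f₁ s'| + |f₂ s' - f₂ y| := by
          rw [e1, e2]
          have hh : f₁ x - f₂ y = (f₁ x - f₁ s') + (f₂ s' - f₂ y) := by rw [hjoin]; ring
          rw [hh]; exact abs_add_le _ _
        nlinarith [mul_le_mul_of_nonneg_right hK1K (show (0:ℝ) ≤ s' - x by linarith),
          mul_le_mul_of_nonneg_right hK2K (show (0:ℝ) ≤ y - s' by linarith)]
      · have e1 : f x = f₂ x := hfeq2 x hxs
        have e2 : f y = f₂ y := hfeq2 y hys
        have t := hl₂.2 x ⟨hxs.le, hx.2⟩ y ⟨hys.le, hy.2⟩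
        have habs : |x - y| = y - x := by rw [abs_sub_comm]; exact abs_of_nonneg (by linarith)
        rw [habs] at t
        rw [e1, e2]
        nlinarith [mul_le_mul_of_nonneg_right hK2K (show (0:ℝ) ≤ y - x by linarith)]
  have hlf : LipHyp 0 S K f := by
    refine ⟨hK0, fun x hx y hy => ?_⟩
    rcases le_total x y with hxy | hxy
    · have := key x hx y hy hxy
      have habs : |x - y| = y - x := by rw [abs_sub_comm]; exact abs_of_nonneg (by linarith)
      rw [habs]; exact this
    · have t := key y hy x hx hxy
      have habs : |x - y| = x - y := abs_of_nonneg (by linarith)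
      rw [habs, abs_sub_comm]
      exact t
  have hcontf : ContinuousOn f (Icc 0 S) := hlf.continuousOn
  -- envelopes
  set u : ℝ → ℝ := convEnv 0 S f with hudef
  set v : ℝ → ℝ := convEnv 0 s' f₁ with hvdef
  set w : ℝ → ℝ := convEnv s' S f₂ with hwdef
  have hsub1 : Icc (0:ℝ) s' ⊆ Icc 0 S := Icc_subset_Icc le_rfl hS1.le
  have hsub2 : Icc s' S ⊆ Icc (0:ℝ) S := Icc_subset_Icc hs'.le le_rfl
  have hu_cvx : ConvexOn ℝ (Icc 0 S) u := env_convexOn hlf hS0.le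
  have hv_cvx : ConvexOn ℝ (Icc 0 s') v := env_convexOn hl₁ hs'.le
  have hw_cvx : ConvexOn ℝ (Icc s' S) w := env_convexOn hl₂ hS1.le
  have huf : ∀ x ∈ Icc (0:ℝ) S, u x ≤ f x := fun x hx => env_le_self hlf hS0.le hx
  have hvf : ∀ x ∈ Icc (0:ℝ) s', v x ≤ f₁ x := fun x hx => env_le_self hl₁ hs'.le hx
  have hwf : ∀ x ∈ Icc s' S, w x ≤ f₂ x := fun x hx => env_le_self hl₂ hS1.le hx
  have huv : ∀ x ∈ Icc (0:ℝ) s', u x ≤ v x := by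
    intro x hx
    refine minorant_le_env 0 s' f₁ (hu_cvx.subset hsub1 (convex_Icc _ _)) ?_ hx
    intro z hz
    rw [← hfeq1 z hz.2]
    exact huf z (hsub1 hz)
  have huw : ∀ x ∈ Icc s' S, u x ≤ w x := by
    intro x hx
    refine minorant_le_env s' S f₂ (hu_cvx.subset hsub2 (convex_Icc _ _)) ?_ hx
    intro z hz
    rcases eq_or_lt_of_le hz.1 with heq | hlt
    · rw [← heq, ← hfs₂]
      exact huf s' ⟨hs'.le, hS1.le⟩
    · rw [← hfeq2 z hlt]
      exact huf z (hsub2 hz)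
  have hv0 : v 0 = f₁ 0 := env_eq_left hl₁ hs'.le
  have hvs' : v s' = f₁ s' := env_eq_right hl₁ hs'.le
  have hws' : w s' = f₂ s' := env_eq_left hl₂ hS1.le
  have hwS : w S = f₂ S := env_eq_right hl₂ hS1.le
  have hu0 : u 0 = f 0 := env_eq_left hlf hS0.le
  have huS : u S = f S := env_eq_right hlf hS0.le
  -- glue statement
  have hglue : u s' = f s' →
      (∀ x ∈ Icc (0:ℝ) s', v x = u x) ∧ (∀ x ∈ Icc s' S, w x = u x) := by
    intro hc
    have hvs'u : v s' = u s' := by rw [hvs', ← hfs₁, hc]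
    have hws'u : w s' = u s' := by rw [hws', ← hfs₂, hc]
    set gl : ℝ → ℝ := fun x => if x ≤ s' then v x else w x with hgl
    have hg1 : ∀ x : ℝ, x ≤ s' → gl x = v x := by
      intro x hx; rw [hgl]; simp only [if_pos hx]
    have hg2 : ∀ x : ℝ, s' ≤ x → gl x = w x := by
      intro x hx
      rcases eq_or_lt_of_le hx with heq | hlt
      · rw [hgl]; simp only [← heq, if_pos le_rfl]
        rw [hvs'u, ← hws'u]
      · rw [hgl]; simp only [if_neg (not_le.mpr hlt)]
    have JC : ∀ c, 0 ≤ c → c < s' → ∀ e, s' < e → e ≤ S →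
        (v s' - v c) / (s' - c) ≤ (w e - w s') / (e - s') := by
      intro c hc0 hcs e hse heS
      have hcS : c ∈ Icc (0:ℝ) S := ⟨hc0, by linarith⟩
      have heSm : e ∈ Icc (0:ℝ) S := ⟨by linarith, heS⟩
      have hcs' : c ∈ Icc (0:ℝ) s' := ⟨hc0, hcs.le⟩
      have hes : e ∈ Icc s' S := ⟨hse.le, heS⟩
      have step1 : (v s' - v c) / (s' - c) ≤ (u s' - u c) / (s' - c) := by
        rw [div_le_div_iff₀ (by linarith) (by linarith)]
        have h1 := huv c hcs'
        nlinarith [hvs'u]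
      have step2 : (u s' - u c) / (s' - c) ≤ (u e - u s') / (e - s') :=
        hu_cvx.slope_mono_adjacent hcS heSm hcs hse
      have step3 : (u e - u s') / (e - s') ≤ (w e - w s') / (e - s') := by
        rw [div_le_div_iff₀ (by linarith) (by linarith)]
        have h1 := huw e hes
        nlinarith [hws'u]
      linarith
    have hgcvx : ConvexOn ℝ (Icc 0 S) gl := by
      apply convexOn_of_slope_mono_adjacent (convex_Icc 0 S)
      intro x y z hx hz hxy hyz
      rcases le_or_gt z s' with hzs | hzs
      · rw [hg1 x (by linarith), hg1 y (by linarith), hg1 z hzs]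
        exact hv_cvx.slope_mono_adjacent ⟨hx.1, by linarith⟩ ⟨by linarith [hx.1], hzs⟩ hxy hyz
      · rcases le_or_gt s' x with hsx | hsx
        · rw [hg2 x hsx, hg2 y (by linarith), hg2 z (by linarith)]
          exact hw_cvx.slope_mono_adjacent ⟨hsx, by linarith [hz.2]⟩ ⟨by linarith, hz.2⟩ hxy hyz
        · -- x < s' < z
          rcases lt_trichotomy y s' with hys | hys | hys
          · -- y < s'
            rw [hg1 x (by linarith), hg1 y hys.le, hg2 z hzs.le]
            have h1 : (v y - v x) / (y - x) ≤ (v s' - v y) / (s' - y) :=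
              hv_cvx.slope_mono_adjacent ⟨hx.1, by linarith⟩ ⟨hs'.le, le_rfl⟩ hxy hys
            have h2 : (v s' - v y) / (s' - y) ≤ (w z - w s') / (z - s') :=
              JC y (by linarith [hx.1]) hys z hzs hz.2
            have h3 : (v s' - v y) / (s' - y) ≤ (w z - v y) / (z - y) := by
              have := slope_mid_ge (p := v y) (q := v s') (r := w z) hys hzs ?_
              · -- need rewrite w s' = v s'
                exact this
              · rw [hws'u, ← hvs'u] at h2
                exact h2
            linarith
          · -- y = s'
            subst hys
            rw [hg1 x (by linarith), hg2 z hzs.le, hg1 y le_rfl]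
            have h4 : w z - v y = w z - w y := by rw [hvs'u, ← hws'u]
            rw [h4]
            exact JC x hx.1 hxy z hyz hz.2
          · -- y > s'
            rw [hg1 x (by linarith), hg2 y hys.le, hg2 z (by linarith)]
            have h1 : (w z - w y) / (z - y) ≥ (w y - w s') / (y - s') :=
              hw_cvx.slope_mono_adjacent ⟨le_rfl, by linarith [hz.2]⟩ ⟨by linarith, hz.2⟩ hys hyz
            have h2 : (v s' - v x) / (s' - x) ≤ (w y - w s') / (y - s') :=
              JC x hx.1 hsx y hys (by linarith [hz.2])
            have h3 : (w y - v x) / (y - x) ≤ (w y - v s') / (y - s') := by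
              have := slope_mid_le (p := v x) (q := v s') (r := w y) hsx hys ?_
              · exact this
              · rw [hws'u, ← hvs'u] at h2
                exact h2
            have h4 : (w y - v s') / (y - s') = (w y - w s') / (y - s') := by
              rw [hvs'u, ← hws'u]
            linarith
    have hgle : ∀ x ∈ Icc (0:ℝ) S, gl x ≤ f x := by
      intro x hx
      rcases le_or_gt x s' with hxs | hxs
      · rw [hg1 x hxs, hfeq1 x hxs]
        exact hvf x ⟨hx.1, hxs⟩
      · rw [hg2 x hxs.le, hfeq2 x hxs]
        exact hwf x ⟨hxs.le, hx.2⟩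
    have hgu : ∀ x ∈ Icc (0:ℝ) S, gl x ≤ u x :=
      fun x hx => minorant_le_env 0 S f hgcvx hgle hx
    constructor
    · intro x hx
      refine le_antisymm ?_ (huv x hx)
      have := hgu x (hsub1 hx)
      rw [hg1 x hx.2] at this
      exact this
    · intro x hx
      refine le_antisymm ?_ (huw x hx)
      have := hgu x (hsub2 hx)
      rw [hg2 x hx.1] at this
      exact this
  have hQ0 : 0 ≤ Q := by
    rw [hQ]
    have := huf s' ⟨hs'.le, hS1.le⟩
    linarith
  have Need1 : ∀ τ ∈ Icc (0:ℝ) s', m τ ≤ m' τ := by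
    intro τ hτ
    have hτS : τ ∈ Icc (0:ℝ) S := hsub1 hτ
    rcases eq_or_lt_of_le (huf τ hτS) with hc | hc
    · -- contact case
      rcases eq_or_lt_of_le hτ.2 with hτe | hτe
      · -- τ = s' : glue
        subst hτe
        obtain ⟨hveq, _⟩ := hglue hc
        have hus' : HasDerivWithinAt u (m τ) (Icc 0 τ) τ := (hm τ hτS).mono hsub1
        have hv' : HasDerivWithinAt v (m τ) (Icc 0 τ) τ :=
          hus'.congr (fun x hx => hveq x hx) (hveq τ hτ)
        have e1 : derivWithin v (Icc 0 τ) τ = m τ :=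
          hv'.derivWithin ((uniqueDiffOn_Icc hs') τ hτ)
        have e2 : derivWithin v (Icc 0 τ) τ = m' τ :=
          (hm' τ hτ).derivWithin ((uniqueDiffOn_Icc hs') τ hτ)
        exact le_of_eq (e1.symm.trans e2)
      · -- τ < s'
        have hvτ : v τ = u τ := by
          refine le_antisymm ?_ (huv τ hτ)
          calc v τ ≤ f₁ τ := hvf τ hτ
            _ = f τ := (hfeq1 τ hτ.2).symm
            _ = u τ := hc.symm
        apply deriv_ge_of_slope_ge_right (hm' τ hτ) hτ.1 hτe le_rfl
        intro t ht
        rw [slope_def_field]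
        have htm : t ∈ Icc (0:ℝ) s' := ⟨by linarith [ht.1, hτ.1], ht.2.le⟩
        have h1 := support_line hu_cvx hτS (hm τ hτS) (hsub1 htm)
        have h2 := huv t htm
        rw [le_div_iff₀ (by linarith [ht.1] : (0:ℝ) < t - τ)]
        linarith
    · -- strict case : extraction
      obtain ⟨⟨p, hpS, hpτ, hup, hfp⟩, -⟩ := exists_contact hS0 hlf hcontf hτS (hm τ hτS) hc
      rw [← hudef] at hup hfp
      have hps : p ∈ Icc (0:ℝ) s' := ⟨hpS.1, by linarith [hτ.2]⟩
      have hfp1 : f p = f₁ p := hfeq1 p hps.2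
      have hvp : v p = u p := by
        refine le_antisymm ?_ (huv p hps)
        calc v p ≤ f₁ p := hvf p hps
          _ = f p := hfp1.symm
          _ = u p := hup.symm
      have hvpval : v p = u τ + m τ * (p - τ) := by
        rw [hvp, hup]; exact hfp
      have hsl := support_line hv_cvx hτ (hm' τ hτ) hps
      have hvτ : u τ ≤ v τ := huv τ hτ
      have key2 : m τ * (τ - p) ≤ m' τ * (τ - p) := by nlinarith [hsl, hvpval, hvτ]
      exact (mul_le_mul_iff_left₀ (show (0:ℝ) < τ - p by linarith)).mp key2
  have Need2 : ∀ τ ∈ Icc s' S, m'' τ ≤ m τ := by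
    intro τ hτ
    have hτS : τ ∈ Icc (0:ℝ) S := hsub2 hτ
    rcases eq_or_lt_of_le (huf τ hτS) with hc | hc
    · rcases eq_or_lt_of_le hτ.1 with hτe | hτe
      · -- τ = s' : glue
        subst hτe
        obtain ⟨-, hweq⟩ := hglue hc
        have hus' : HasDerivWithinAt u (m s') (Icc s' S) s' := (hm s' hτS).mono hsub2
        have hw' : HasDerivWithinAt w (m s') (Icc s' S) s' :=
          hus'.congr (fun x hx => hweq x hx) (hweq s' hτ)
        have e1 : derivWithin w (Icc s' S) s' = m s' :=
          hw'.derivWithin ((uniqueDiffOn_Icc hS1) s' hτ)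
        have e2 : derivWithin w (Icc s' S) s' = m'' s' :=
          (hm'' s' hτ).derivWithin ((uniqueDiffOn_Icc hS1) s' hτ)
        exact le_of_eq (e2.symm.trans e1)
      · -- s' < τ
        have hwτ : w τ = u τ := by
          refine le_antisymm ?_ (huw τ hτ)
          calc w τ ≤ f₂ τ := hwf τ hτ
            _ = f τ := (hfeq2 τ hτe).symm
            _ = u τ := hc.symm
        apply deriv_le_of_slope_le_left (hm'' τ hτ) le_rfl hτe hτ.2
        intro t ht
        rw [slope_def_field]
        have htm : t ∈ Icc s' S := ⟨ht.1.le, by linarith [ht.2, hτ.2]⟩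
        have h1 := support_line hu_cvx hτS (hm τ hτS) (hsub2 htm)
        have h2 := huw t htm
        rw [div_le_iff_of_neg (by linarith [ht.2] : t - τ < 0)]
        linarith
    · obtain ⟨-, ⟨q, hqS, hqτ, huq, hfq⟩⟩ := exists_contact hS0 hlf hcontf hτS (hm τ hτS) hc
      rw [← hudef] at huq hfq
      have hqs : q ∈ Icc s' S := ⟨by linarith [hτ.1], hqS.2⟩
      have hfq2 : f q = f₂ q := hfeq2 q (by linarith [hτ.1])
      have hwq : w q = u q := by
        refine le_antisymm ?_ (huw q hqs)
        calc w q ≤ f₂ q := hwf q hqs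
          _ = f q := hfq2.symm
          _ = u q := huq.symm
      have hwqval : w q = u τ + m τ * (q - τ) := by
        rw [hwq, huq]; exact hfq
      have hsl := support_line hw_cvx hτ (hm'' τ hτ) hqs
      have hwτ : u τ ≤ w τ := huw τ hτ
      have key2 : m'' τ * (q - τ) ≤ m τ * (q - τ) := by nlinarith [hsl, hwqval, hwτ]
      exact (mul_le_mul_iff_left₀ (show (0:ℝ) < q - τ by linarith)).mp key2
  refine ⟨hQ0, Need1, Need2, ?_⟩
  -- integrability
  have hmono_m : MonotoneOn m (Icc 0 S) := deriv_monotoneOn hu_cvx hm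
  have hint1 : IntervalIntegrable m' MeasureTheory.volume 0 s' := by
    have hmn : MonotoneOn m' (uIcc (0:ℝ) s') := by
      rw [uIcc_of_le hs'.le]; exact deriv_monotoneOn hv_cvx hm'
    exact hmn.intervalIntegrable
  have hint2 : IntervalIntegrable m MeasureTheory.volume 0 s' := by
    have hmn : MonotoneOn m (uIcc (0:ℝ) s') := by
      rw [uIcc_of_le hs'.le]; exact hmono_m.mono hsub1
    exact hmn.intervalIntegrable
  have hint3 : IntervalIntegrable m MeasureTheory.volume s' S := by
    have hmn : MonotoneOn m (uIcc s' S) := by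
      rw [uIcc_of_le hS1.le]; exact hmono_m.mono hsub2
    exact hmn.intervalIntegrable
  have hint4 : IntervalIntegrable m'' MeasureTheory.volume s' S := by
    have hmn : MonotoneOn m'' (uIcc s' S) := by
      rw [uIcc_of_le hS1.le]; exact deriv_monotoneOn hw_cvx hm''
    exact hmn.intervalIntegrable
  -- FTC
  have hcv : ContinuousOn v (Icc 0 s') := fun x hx => (hm' x hx).continuousWithinAt
  have hcu : ContinuousOn u (Icc 0 S) := fun x hx => (hm x hx).continuousWithinAt
  have hcw : ContinuousOn w (Icc s' S) := fun x hx => (hm'' x hx).continuousWithinAt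
  have I1 : (∫ τ in (0:ℝ)..s', m' τ) = v s' - v 0 := by
    refine intervalIntegral.integral_eq_sub_of_hasDeriv_right_of_le hs'.le hcv ?_ hint1
    intro x hx
    exact ((hm' x (Ioo_subset_Icc_self hx)).hasDerivAt
      (Icc_mem_nhds hx.1 hx.2)).hasDerivWithinAt
  have I2 : (∫ τ in (0:ℝ)..s', m τ) = u s' - u 0 := by
    refine intervalIntegral.integral_eq_sub_of_hasDeriv_right_of_le hs'.le (hcu.mono hsub1) ?_ hint2
    intro x hx
    exact ((hm x (hsub1 (Ioo_subset_Icc_self hx))).hasDerivAt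
      (Icc_mem_nhds hx.1 (lt_of_lt_of_le hx.2 hS1.le))).hasDerivWithinAt
  have I3 : (∫ τ in s'..S, m τ) = u S - u s' := by
    refine intervalIntegral.integral_eq_sub_of_hasDeriv_right_of_le hS1.le (hcu.mono hsub2) ?_ hint3
    intro x hx
    exact ((hm x (hsub2 (Ioo_subset_Icc_self hx))).hasDerivAt
      (Icc_mem_nhds (lt_trans hs' hx.1) hx.2)).hasDerivWithinAt
  have I4 : (∫ τ in s'..S, m'' τ) = w S - w s' := by
    refine intervalIntegral.integral_eq_sub_of_hasDeriv_right_of_le hS1.le hcw ?_ hint4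
    intro x hx
    exact ((hm'' x (Ioo_subset_Icc_self hx)).hasDerivAt
      (Icc_mem_nhds hx.1 hx.2)).hasDerivWithinAt
  rw [intervalIntegral.integral_sub hint1 hint2, intervalIntegral.integral_sub hint3 hint4,
    I1, I2, I3, I4, hQ]
  have e1 : v s' = f₁ s' := hvs'
  have e2 : v 0 = f₁ 0 := hv0
  have e3 : u 0 = f₁ 0 := by rw [hu0, hf0]
  have e4 : u S = f₂ S := by rw [huS, hfS]
  have e5 : w S = f₂ S := hwS
  have e6 : w s' = f₁ s' := by rw [hws', ← hjoin]
  have e7 : f s' = f₁ s' := hfs₁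
  linarith
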